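/- For any n ≥ d ≥ 1 and m ≥ 1, P(n+m, d) ≥ P(n+m, m, d) · P(n, d). -/
import Mathlib

/-- The Chebyshev distance between two functions on `{1,…,m}`
(represented on `Fin m`): `max_i |σ(i) − τ(i)|`. -/
def cheb {m : ℕ} (σ τ : Fin m → ℕ) : ℕ :=
  Finset.univ.sup fun i => Nat.dist (σ i) (τ i)

/-- `Pnm n m d` is the maximum cardinality of a set of injective functions
from `{1,…,m}` to `{1,…,n}` whose pairwise Chebyshev distance is at least
`d`. -/
noncomputable def Pnm (n m d : ℕ) : ℕ :=
  sSup {k | ∃ A : Finset (Fin m → ℕ),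
    (∀ σ ∈ A, Function.Injective σ ∧ ∀ i, σ i ∈ Finset.Icc 1 n) ∧
    (∀ σ ∈ A, ∀ τ ∈ A, σ ≠ τ → d ≤ cheb σ τ) ∧ A.card = k}

/-- `P n d` is the maximum cardinality of a set of permutations of `{1,…,n}`
(i.e. injective functions from the `n`-element set `{1,…,n}` to `{1,…,n}`)
whose pairwise Chebyshev distance is at least `d`. -/
noncomputable def P (n d : ℕ) : ℕ := Pnm n n d

def PnmSet (n m d : ℕ) : Set ℕ :=
  {k | ∃ A : Finset (Fin m → ℕ),
    (∀ σ ∈ A, Function.Injective σ ∧ ∀ i, σ i ∈ Finset.Icc 1 n) ∧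
    (∀ σ ∈ A, ∀ τ ∈ A, σ ≠ τ → d ≤ cheb σ τ) ∧ A.card = k}

lemma PnmSet_nonempty (n m d : ℕ) : (PnmSet n m d).Nonempty :=
  ⟨0, ∅, by simp, by simp, by simp⟩

lemma PnmSet_bddAbove (n m d : ℕ) : BddAbove (PnmSet n m d) := by
  refine ⟨(Finset.Icc (fun _ => 1) (fun _ => n) : Finset (Fin m → ℕ)).card, ?_⟩
  rintro k ⟨A, h1, -, rfl⟩
  refine Finset.card_le_card fun σ hσ => ?_
  rw [Finset.mem_Icc]
  have h := (h1 σ hσ).2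
  exact ⟨fun i => (Finset.mem_Icc.mp (h i)).1, fun i => (Finset.mem_Icc.mp (h i)).2⟩

lemma fin_smono_add_le {k : ℕ} {f : Fin k → ℕ} (hf : StrictMono f) :
    ∀ t (a b : Fin k), (b : ℕ) = (a : ℕ) + t → f a + t ≤ f b := by
  intro t
  induction t with
  | zero => intro a b h; have : a = b := Fin.ext (by omega); simp [this]
  | succ t ih =>
    intro a b h
    have hb' : (a : ℕ) + t < k := by have := b.isLt; omega
    have h1 := ih a ⟨(a:ℕ)+t, hb'⟩ rfl
    have h2 : f ⟨(a:ℕ)+t, hb'⟩ < f b := hf (by rw [Fin.lt_def]; simp; omega)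
    omega

lemma fin_smono_dist_le {k : ℕ} {f : Fin k → ℕ} (hf : StrictMono f) (a b : Fin k) :
    Nat.dist (a : ℕ) (b : ℕ) ≤ Nat.dist (f a) (f b) := by
  rcases le_total (a : ℕ) (b : ℕ) with h | h
  · have := fin_smono_add_le hf ((b:ℕ) - a) a b (by omega)
    simp only [Nat.dist]; omega
  · have := fin_smono_add_le hf ((a:ℕ) - b) b a (by omega)
    simp only [Nat.dist]; omega

noncomputable def Tset (n m : ℕ) (σ : Fin m → ℕ) : Finset ℕ :=
  Finset.Icc 1 (n + m) \ Finset.image σ Finset.univ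

noncomputable def gg (n m : ℕ) (σ : Fin m → ℕ) (v : ℕ) : ℕ :=
  if h : v - 1 < (Tset n m σ).card
  then ((Tset n m σ).orderEmbOfFin rfl ⟨v - 1, h⟩ : ℕ)
  else 0

lemma Tset_card (n m : ℕ) (σ : Fin m → ℕ) (hinj : Function.Injective σ)
    (hmem : ∀ i, σ i ∈ Finset.Icc 1 (n+m)) : (Tset n m σ).card = n := by
  rw [Tset, Finset.card_sdiff_of_subset]
  · rw [Finset.card_image_of_injective _ hinj, Nat.card_Icc, Finset.card_univ,
      Fintype.card_fin]
    omega
  · intro x hx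
    simp only [Finset.mem_image, Finset.mem_univ, true_and] at hx
    obtain ⟨i, rfl⟩ := hx
    exact hmem i

lemma gg_mem (n m : ℕ) (σ : Fin m → ℕ) (hc : (Tset n m σ).card = n) {v : ℕ}
    (hv : v ∈ Finset.Icc 1 n) : gg n m σ v ∈ Tset n m σ := by
  simp only [Finset.mem_Icc] at hv
  have hn : 1 ≤ n := le_trans hv.1 hv.2
  have h : v - 1 < (Tset n m σ).card := by omega
  rw [gg, dif_pos h]
  exact Finset.orderEmbOfFin_mem _ _ _

lemma dist_le_gg (n m : ℕ) (σ : Fin m → ℕ) (hc : (Tset n m σ).card = n)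
    {v w : ℕ} (hv : v ∈ Finset.Icc 1 n) (hw : w ∈ Finset.Icc 1 n) :
    Nat.dist v w ≤ Nat.dist (gg n m σ v) (gg n m σ w) := by
  simp only [Finset.mem_Icc] at hv hw
  have hv' : v - 1 < (Tset n m σ).card := by omega
  have hw' : w - 1 < (Tset n m σ).card := by omega
  rw [gg, gg, dif_pos hv', dif_pos hw']
  have hsm : StrictMono (fun j : Fin (Tset n m σ).card =>
      ((Tset n m σ).orderEmbOfFin rfl j : ℕ)) :=
    fun a b h => ((Tset n m σ).orderEmbOfFin rfl).strictMono h
  have key := fin_smono_dist_le hsm ⟨v-1, hv'⟩ ⟨w-1, hw'⟩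
  have hdd : Nat.dist v w = Nat.dist (v-1) (w-1) := by
    simp only [Nat.dist]; omega
  rw [hdd]
  exact key

lemma gg_inj (n m : ℕ) (σ : Fin m → ℕ) (hc : (Tset n m σ).card = n)
    {v w : ℕ} (hv : v ∈ Finset.Icc 1 n) (hw : w ∈ Finset.Icc 1 n)
    (h : gg n m σ v = gg n m σ w) : v = w := by
  have := dist_le_gg n m σ hc hv hw
  rw [h] at this
  simp only [Nat.dist_self, Nat.le_zero] at this
  exact Nat.eq_of_dist_eq_zero this

noncomputable def Ffun (n m : ℕ) (σ : Fin m → ℕ) (τ : Fin n → ℕ) : Fin (n + m) → ℕ :=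
  fun i => if h : (i : ℕ) < m then σ ⟨i, h⟩
    else gg n m σ (τ ⟨(i : ℕ) - m, by have := i.isLt; omega⟩)

/-- For any `n ≥ d ≥ 1` and `m ≥ 1`, `P(n+m, d) ≥ P(n+m, m, d) · P(n, d)`. -/
theorem stmt8 (n d m : ℕ) (hd : 1 ≤ d) (hn : d ≤ n) (hm : 1 ≤ m) :
    Pnm (n + m) m d * P n d ≤ P (n + m) d := by
  classical
  have hn1 : 1 ≤ n := le_trans hd hn
  obtain ⟨A, hA1, hA2, hAcard⟩ :
      Pnm (n + m) m d ∈ PnmSet (n + m) m d :=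
    Nat.sSup_mem (PnmSet_nonempty _ _ _) (PnmSet_bddAbove _ _ _)
  obtain ⟨B, hB1, hB2, hBcard⟩ : P n d ∈ PnmSet n n d :=
    Nat.sSup_mem (PnmSet_nonempty _ _ _) (PnmSet_bddAbove _ _ _)
  have hTc : ∀ σ ∈ A, (Tset n m σ).card = n := fun σ hσ =>
    Tset_card n m σ (hA1 σ hσ).1 (hA1 σ hσ).2
  have hlt : ∀ (σ : Fin m → ℕ) (τ : Fin n → ℕ) (i : Fin (n+m)) (h : (i:ℕ) < m),
      Ffun n m σ τ i = σ ⟨i, h⟩ := fun σ τ i h => dif_pos h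
  have hge : ∀ (σ : Fin m → ℕ) (τ : Fin n → ℕ) (i : Fin (n+m)) (h : ¬ (i:ℕ) < m),
      Ffun n m σ τ i = gg n m σ (τ ⟨(i:ℕ) - m, by have := i.isLt; omega⟩) :=
    fun σ τ i h => dif_neg h
  have hge' : ∀ (σ : Fin m → ℕ) (τ : Fin n → ℕ) (j : Fin n),
      Ffun n m σ τ ⟨(j:ℕ) + m, by have := j.isLt; omega⟩ = gg n m σ (τ j) := by
    intro σ τ j
    rw [hge σ τ _ (by simp)]
    exact congrArg (gg n m σ) (congrArg τ (Fin.ext (by simp)))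
  have hbot : (⊥ : ℕ) < d := by simp only [Nat.bot_eq_zero]; omega
  -- injectivity of each combined map
  have hFinj : ∀ σ ∈ A, ∀ τ ∈ B, Function.Injective (Ffun n m σ τ) := by
    intro σ hσ τ hτ i i' heq
    by_cases hi : (i:ℕ) < m <;> by_cases hi' : (i':ℕ) < m
    · rw [hlt σ τ i hi, hlt σ τ i' hi'] at heq
      have h2 := (hA1 σ hσ).1 heq
      have h3 : (i:ℕ) = (i':ℕ) := by simpa using h2
      exact Fin.ext h3
    · exfalso
      rw [hlt σ τ i hi, hge σ τ i' hi'] at heq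
      have hmem := gg_mem n m σ (hTc σ hσ)
        ((hB1 τ hτ).2 ⟨(i':ℕ) - m, by have := i'.isLt; omega⟩)
      rw [← heq, Tset, Finset.mem_sdiff] at hmem
      exact hmem.2 (Finset.mem_image_of_mem σ (Finset.mem_univ _))
    · exfalso
      rw [hlt σ τ i' hi', hge σ τ i hi] at heq
      have hmem := gg_mem n m σ (hTc σ hσ)
        ((hB1 τ hτ).2 ⟨(i:ℕ) - m, by have := i.isLt; omega⟩)
      rw [heq, Tset, Finset.mem_sdiff] at hmem
      exact hmem.2 (Finset.mem_image_of_mem σ (Finset.mem_univ _))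
    · rw [hge σ τ i hi, hge σ τ i' hi'] at heq
      have h1 := gg_inj n m σ (hTc σ hσ)
        ((hB1 τ hτ).2 ⟨(i:ℕ) - m, by have := i.isLt; omega⟩)
        ((hB1 τ hτ).2 ⟨(i':ℕ) - m, by have := i'.isLt; omega⟩) heq
      have h2 := (hB1 τ hτ).1 h1
      have h3 : (i:ℕ) - m = (i':ℕ) - m := congrArg Fin.val h2
      exact Fin.ext (by omega)
  -- injectivity of the pairing
  have hpair : ∀ σ ∈ A, ∀ τ ∈ B, ∀ σ' ∈ A, ∀ τ' ∈ B,
      Ffun n m σ τ = Ffun n m σ' τ' → σ = σ' ∧ τ = τ' := by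
    intro σ hσ τ hτ σ' hσ' τ' hτ' heq
    have hσσ : σ = σ' := by
      funext j
      have h := congrFun heq ⟨(j:ℕ), by have := j.isLt; omega⟩
      rw [hlt σ τ _ j.isLt, hlt σ' τ' _ j.isLt] at h
      exact h
    subst hσσ
    refine ⟨rfl, ?_⟩
    funext j
    have h : gg n m σ (τ j) = gg n m σ (τ' j) := by
      rw [← hge' σ τ j, ← hge' σ τ' j, heq]
    exact gg_inj n m σ (hTc σ hσ) ((hB1 τ hτ).2 j) ((hB1 τ' hτ').2 j) h
  -- distance property
  have hdist : ∀ σ ∈ A, ∀ τ ∈ B, ∀ σ' ∈ A, ∀ τ' ∈ B,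
      Ffun n m σ τ ≠ Ffun n m σ' τ' → d ≤ cheb (Ffun n m σ τ) (Ffun n m σ' τ') := by
    intro σ hσ τ hτ σ' hσ' τ' hτ' hne
    unfold cheb
    by_cases hσσ : σ = σ'
    · subst hσσ
      have hττ : τ ≠ τ' := by
        rintro rfl; exact hne rfl
      have hc := hB2 τ hτ τ' hτ' hττ
      unfold cheb at hc
      obtain ⟨j, -, hj⟩ := (Finset.le_sup_iff hbot).mp hc
      have hj2 : d ≤ Nat.dist
          (Ffun n m σ τ ⟨(j:ℕ)+m, by have := j.isLt; omega⟩)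
          (Ffun n m σ τ' ⟨(j:ℕ)+m, by have := j.isLt; omega⟩) := by
        rw [hge' σ τ j, hge' σ τ' j]
        exact le_trans hj (dist_le_gg n m σ (hTc σ hσ) ((hB1 τ hτ).2 j) ((hB1 τ' hτ').2 j))
      exact le_trans hj2 (Finset.le_sup
        (f := fun i => Nat.dist (Ffun n m σ τ i) (Ffun n m σ τ' i)) (Finset.mem_univ _))
    · have hc := hA2 σ hσ σ' hσ' hσσ
      unfold cheb at hc
      obtain ⟨j, -, hj⟩ := (Finset.le_sup_iff hbot).mp hc
      have e1 : Ffun n m σ τ ⟨(j:ℕ), by have := j.isLt; omega⟩ = σ j :=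
        hlt σ τ _ j.isLt
      have e2 : Ffun n m σ' τ' ⟨(j:ℕ), by have := j.isLt; omega⟩ = σ' j :=
        hlt σ' τ' _ j.isLt
      have hj2 : d ≤ Nat.dist
          (Ffun n m σ τ ⟨(j:ℕ), by have := j.isLt; omega⟩)
          (Ffun n m σ' τ' ⟨(j:ℕ), by have := j.isLt; omega⟩) := by
        rw [e1, e2]; exact hj
      exact le_trans hj2 (Finset.le_sup
        (f := fun i => Nat.dist (Ffun n m σ τ i) (Ffun n m σ' τ' i)) (Finset.mem_univ _))
  -- the combined code
  set C : Finset (Fin (n+m) → ℕ) := (A ×ˢ B).image (fun p => Ffun n m p.1 p.2) with hC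
  have hCcard : C.card = A.card * B.card := by
    rw [hC, Finset.card_image_of_injOn, Finset.card_product]
    rintro ⟨σ, τ⟩ hp ⟨σ', τ'⟩ hp' heq
    rw [Finset.mem_coe, Finset.mem_product] at hp hp'
    obtain ⟨e1, e2⟩ := hpair σ hp.1 τ hp.2 σ' hp'.1 τ' hp'.2 heq
    simp [e1, e2]
  have hmemb : (Pnm (n + m) m d * P n d) ∈ PnmSet (n+m) (n+m) d := by
    refine ⟨C, ?_, ?_, ?_⟩
    · intro π hπ
      rw [hC, Finset.mem_image] at hπ
      obtain ⟨⟨σ, τ⟩, hp, rfl⟩ := hπ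
      rw [Finset.mem_product] at hp
      refine ⟨hFinj σ hp.1 τ hp.2, ?_⟩
      intro i
      by_cases hi : (i:ℕ) < m
      · rw [hlt σ τ i hi]; exact (hA1 σ hp.1).2 _
      · rw [hge σ τ i hi]
        have hmem := gg_mem n m σ (hTc σ hp.1)
          ((hB1 τ hp.2).2 ⟨(i:ℕ) - m, by have := i.isLt; omega⟩)
        rw [Tset, Finset.mem_sdiff] at hmem
        exact hmem.1
    · intro π hπ π' hπ' hne
      rw [hC, Finset.mem_image] at hπ hπ'
      obtain ⟨⟨σ, τ⟩, hp, rfl⟩ := hπ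
      obtain ⟨⟨σ', τ'⟩, hp', rfl⟩ := hπ'
      rw [Finset.mem_product] at hp hp'
      exact hdist σ hp.1 τ hp.2 σ' hp'.1 τ' hp'.2 hne
    · rw [hCcard, hAcard, hBcard]
  exact le_csSup (PnmSet_bddAbove _ _ _) hmemb
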